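/- Let U : ℝ^ℓ₊ → ℝ be continuous and monotone (U(x+y) > U(x) whenever y ≥ 0, y ≠ 0), let p_n → p in Δ and a ∈ ℝ^ℓ₊. With B, X, C defined as the budget set, truncation box, and preferred-in-box set at each price, every point d ∈ C(p) is a Kuratowski lower limit point of the sequence {C(p_n)}: C(p) ⊆ Li C(p_n). -/

import Mathlib

open Filter

theorem diag_aux {ℓ : ℕ} {A : ℕ → Set (Fin ℓ → ℝ)} {d : Fin ℓ → ℝ}
    (h : ∀ ε > (0:ℝ), ∀ᶠ n in atTop, ∃ y ∈ A n, dist y d < ε) :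
    ∃ x : ℕ → Fin ℓ → ℝ, (∀ᶠ n in atTop, x n ∈ A n) ∧ Tendsto x atTop (nhds d) := by
  classical
  set x : ℕ → Fin ℓ → ℝ := fun n =>
    if hn : ∃ y ∈ A n, dist y d < Metric.infDist d (A n) + 1/(n+1) then hn.choose else d with hxdef
  have hne : ∀ᶠ n in atTop, (A n).Nonempty := by
    filter_upwards [h 1 one_pos] with n ⟨y, hy, _⟩ using ⟨y, hy⟩
  have hkey : ∀ n, (A n).Nonempty → x n ∈ A n ∧ dist (x n) d < Metric.infDist d (A n) + 1/(n+1) := by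
    intro n hAn
    have hlt : Metric.infDist d (A n) < Metric.infDist d (A n) + 1/(n+1) := by
      have : (0:ℝ) < 1/(n+1) := by positivity
      linarith
    obtain ⟨y, hy, hyd⟩ := (Metric.infDist_lt_iff hAn).1 hlt
    have hn : ∃ y ∈ A n, dist y d < Metric.infDist d (A n) + 1/(n+1) :=
      ⟨y, hy, by rwa [dist_comm]⟩
    simp only [hxdef, dif_pos hn]
    exact ⟨hn.choose_spec.1, hn.choose_spec.2⟩
  refine ⟨x, ?_, ?_⟩
  · filter_upwards [hne] with n hn using (hkey n hn).1
  · rw [Metric.tendsto_atTop]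
    intro ε hε
    have h1 : ∀ᶠ n in atTop, Metric.infDist d (A n) < ε/2 := by
      filter_upwards [h (ε/2) (by linarith)] with n ⟨y, hy, hyd⟩
      calc Metric.infDist d (A n) ≤ dist d y := Metric.infDist_le_dist_of_mem hy
      _ < ε/2 := by rwa [dist_comm]
    have h2 : ∀ᶠ n : ℕ in atTop, 1/((n:ℝ)+1) < ε/2 :=
      tendsto_one_div_add_atTop_nhds_zero_nat.eventually (gt_mem_nhds (by linarith))
    have h3 := (h1.and h2).and hne
    rw [eventually_atTop] at h3
    obtain ⟨N, hN⟩ := h3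
    exact ⟨N, fun n hn => by
      obtain ⟨⟨ha1, ha2⟩, ha3⟩ := hN n hn
      have := (hkey n ha3).2
      linarith⟩

set_option maxHeartbeats 4000000 in
theorem preferred_subset_Li {ℓ : ℕ} (hℓ : 0 < ℓ) (U : (Fin ℓ → ℝ) → ℝ)
    (hU : Continuous U)
    (hmono : ∀ x y : Fin ℓ → ℝ, (∀ i, 0 ≤ x i) → (∀ i, 0 ≤ y i) → y ≠ 0 →
      U (x + y) > U x)
    (a : Fin ℓ → ℝ) (ha : ∀ i, 0 ≤ a i)
    (p : ℕ → Fin ℓ → ℝ) (q : Fin ℓ → ℝ)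
    (hpΔ : ∀ n, (∀ i, 0 < p n i) ∧ ∑ i, p n i = 1)
    (hqΔ : (∀ i, 0 < q i) ∧ ∑ i, q i = 1)
    (hconv : Tendsto p atTop (nhds q))
    (B X C : (Fin ℓ → ℝ) → Set (Fin ℓ → ℝ))
    (hB : ∀ r, B r = {x | (∀ i, 0 ≤ x i) ∧ ∑ i, r i * x i ≤ ∑ i, r i * a i})
    (hX : ∀ r, X r = {x | (∀ i, 0 ≤ x i) ∧ ∀ i, x i ≤ (1 / ⨅ h, r h) * ∑ h, a h})
    (hC : ∀ r, C r = {y ∈ X r | ∀ x ∈ B r, U y ≥ U x}) :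
    ∀ d ∈ C q, ∃ x : ℕ → Fin ℓ → ℝ,
      (∀ᶠ n in atTop, x n ∈ C (p n)) ∧ Tendsto x atTop (nhds d) := by
  classical
  haveI : Nonempty (Fin ℓ) := ⟨⟨0, hℓ⟩⟩
  obtain ⟨hqpos, hqsum⟩ := hqΔ
  intro d hd
  have hdC := hd
  rw [hC q] at hd
  obtain ⟨hdX, hdpref⟩ := hd
  rw [hX q] at hdX
  obtain ⟨hd0, hdle⟩ := hdX
  apply diag_aux
  intro ε₀ hε₀
  -- Case: a = 0
  by_cases hs0 : ∑ i, a i = 0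
  · have haz : ∀ i ∈ Finset.univ, a i = 0 :=
      (Finset.sum_eq_zero_iff_of_nonneg (fun i _ => ha i)).1 hs0
    apply Eventually.of_forall
    intro n
    refine ⟨d, ?_, by simpa using hε₀⟩
    have hd0' : ∀ i, d i = 0 := by
      intro i
      have h1 := hdle i
      rw [hs0] at h1
      have := hd0 i
      nlinarith
    rw [hC (p n)]
    constructor
    · rw [hX (p n)]
      refine ⟨hd0, fun i => ?_⟩
      rw [hd0' i, hs0]
      simp
    · intro x hx
      rw [hB (p n)] at hx
      obtain ⟨hx0, hxb⟩ := hx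
      have hpa : ∑ i, p n i * a i = 0 :=
        Finset.sum_eq_zero fun i hi => by rw [haz i hi, mul_zero]
      have hx0' : x = d := by
        funext i
        rw [hd0' i]
        by_contra hne
        have hxi : 0 < x i := lt_of_le_of_ne (hx0 i) (Ne.symm hne)
        have hterm : 0 < p n i * x i := mul_pos ((hpΔ n).1 i) hxi
        have hsum : p n i * x i ≤ ∑ j, p n j * x j :=
          Finset.single_le_sum (fun j _ => mul_nonneg ((hpΔ n).1 j).le (hx0 j)) (Finset.mem_univ i)
        rw [hpa] at hxb
        linarith
      rw [hx0']
  -- Case: ℓ = 1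
  by_cases hl1 : ℓ = 1
  · subst hl1
    have hpq : ∀ n, p n = q := by
      intro n
      funext i
      have h1 := (hpΔ n).2
      rw [Fin.sum_univ_one] at h1 hqsum
      have : i = 0 := Subsingleton.elim i 0
      rw [this, h1, hqsum]
    apply Eventually.of_forall
    intro n
    exact ⟨d, by rw [hpq n]; exact hdC, by simpa using hε₀⟩
  -- Main case
  have hl2 : 2 ≤ ℓ := by omega
  set s : ℝ := ∑ i, a i with hs_def
  have hs : 0 < s := lt_of_le_of_ne (Finset.sum_nonneg fun i _ => ha i) (Ne.symm hs0)
  obtain ⟨i₀, hi₀⟩ := Finite.exists_min q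
  have hbddq : BddBelow (Set.range q) := (Set.finite_range q).bddBelow
  set m : ℝ := ⨅ h, q h with hm_def
  have hm_eq : m = q i₀ := le_antisymm (ciInf_le hbddq i₀) (le_ciInf hi₀)
  have hmpos : 0 < m := hm_eq ▸ hqpos i₀
  have hm_le : ∀ i, m ≤ q i := fun i => ciInf_le hbddq i
  have hqlt1 : ∀ i, q i < 1 := by
    intro i
    have hij : ∃ j, j ≠ i := by
      rcases Decidable.eq_or_ne i ⟨0, hℓ⟩ with h | h
      · exact ⟨⟨1, by omega⟩, by rw [h]; simp [Fin.ext_iff]⟩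
      · exact ⟨⟨0, hℓ⟩, fun hc => h hc.symm⟩
    obtain ⟨j, hj⟩ := hij
    have hmem : j ∈ Finset.univ.erase i := Finset.mem_erase.2 ⟨hj, Finset.mem_univ j⟩
    have h1 : q i + ∑ k ∈ Finset.univ.erase i, q k = 1 := by
      rw [Finset.add_sum_erase _ _ (Finset.mem_univ i)]; exact hqsum
    have h2 : q j ≤ ∑ k ∈ Finset.univ.erase i, q k :=
      Finset.single_le_sum (fun k _ => (hqpos k).le) hmem
    have := hqpos j
    linarith
  have ha_ex : ∃ i, 0 < a i := by
    by_contra hc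
    push_neg at hc
    exact hs0 (Finset.sum_eq_zero fun i _ => le_antisymm (hc i) (ha i))
  obtain ⟨i₁, hi₁⟩ := ha_ex
  set w : ℝ := ∑ i, q i * a i with hw_def
  have hwpos : 0 < w :=
    Finset.sum_pos' (fun i _ => mul_nonneg (hqpos i).le (ha i))
      ⟨i₁, Finset.mem_univ i₁, mul_pos (hqpos i₁) hi₁⟩
  have hwlt : w < s := by
    apply Finset.sum_lt_sum (fun i _ => mul_le_of_le_one_left (ha i) (hqlt1 i).le)
    exact ⟨i₁, Finset.mem_univ i₁, by nlinarith [hqlt1 i₁]⟩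
  set t : ℝ := (1 / m) * s with ht_def
  have htpos : 0 < t := by positivity
  have hst : s ≤ t := by
    rw [ht_def]
    rw [div_mul_eq_mul_div, one_mul, le_div_iff₀ hmpos]
    nlinarith [hqlt1 i₀, hm_eq]
  have hdle' : ∀ i, d i ≤ t := hdle
  set ε : ℝ := ε₀ / 2 with hε_def
  have hε : 0 < ε := by positivity
  set dε : Fin ℓ → ℝ := fun i => min (d i + ε) t with hdε_def
  -- the strict gap over B q
  have hgap : ∀ x ∈ B q, U x < U dε := by
    intro x hx
    rw [hB q] at hx
    obtain ⟨hx0, hxb⟩ := hx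
    have hxw : ∑ i, q i * x i ≤ w := hxb
    by_cases hcorner : ∀ j, d j = t
    · have hdεd : dε = d := by
        funext j
        show min (d j + ε) t = d j
        rw [hcorner j, min_eq_right (by linarith)]
      have hxlt : ∀ j, x j < d j := by
        intro j
        have h1 : q j * x j ≤ w :=
          le_trans (Finset.single_le_sum
            (fun i _ => mul_nonneg (hqpos i).le (hx0 i)) (Finset.mem_univ j)) hxw
        have h2 : w < q j * t := by
          have hm_le' := hm_le j
          have : m * t = s := by rw [ht_def]; field_simp
          nlinarith
        rw [hcorner j]
        have := hqpos j
        nlinarith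
      have hne : d - x ≠ 0 := by
        intro hc
        have := congrFun hc ⟨0, hℓ⟩
        have h2 := hxlt ⟨0, hℓ⟩
        simp only [Pi.sub_apply, Pi.zero_apply] at this
        linarith
      have := hmono x (d - x) hx0 (fun i => by
        simp only [Pi.sub_apply]; linarith [hxlt i]) hne
      rw [hdεd]
      calc U x < U (x + (d - x)) := this
      _ = U d := by rw [show x + (d - x) = d by ring]
    · push_neg at hcorner
      obtain ⟨j, hj⟩ := hcorner
      have hdj : d j < t := lt_of_le_of_ne (hdle' j) hj
      have hdεge : ∀ i, d i ≤ dε i := fun i => le_min (by linarith) (hdle' i)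
      have hne : dε - d ≠ 0 := by
        intro hc
        have := congrFun hc j
        simp only [Pi.sub_apply, Pi.zero_apply, sub_eq_zero] at this
        have : d j < dε j := lt_min (by linarith) hdj
        simp only [hdε_def] at *
        linarith [congrFun hc j, this]
      have h2 := hmono d (dε - d) hd0 (fun i => by
        simp only [Pi.sub_apply]; linarith [hdεge i]) hne
      have h3 : d + (dε - d) = dε := by ring
      rw [h3] at h2
      have h1 := hdpref x (by rw [hB q]; exact ⟨hx0, hxb⟩)
      linarith
  -- compactness of B q and the max
  have hBq_closed : IsClosed (B q) := by
    rw [hB q]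
    have : {x : Fin ℓ → ℝ | (∀ i, 0 ≤ x i) ∧ ∑ i, q i * x i ≤ ∑ i, q i * a i}
        = (⋂ i, {x : Fin ℓ → ℝ | 0 ≤ x i}) ∩ {x : Fin ℓ → ℝ | ∑ i, q i * x i ≤ ∑ i, q i * a i} := by
      ext x; simp [Set.mem_iInter]
    rw [this]
    exact IsClosed.inter
      (isClosed_iInter fun i => isClosed_le continuous_const (continuous_apply i))
      (isClosed_le (continuous_finset_sum _ fun i _ => continuous_const.mul (continuous_apply i))
        continuous_const)
  have hBq_bd : ∀ x ∈ B q, ∀ i, x i ≤ w / m := by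
    intro x hx i
    rw [hB q] at hx
    obtain ⟨hx0, hxb⟩ := hx
    have h1 : q i * x i ≤ w :=
      le_trans (Finset.single_le_sum
        (fun k _ => mul_nonneg (hqpos k).le (hx0 k)) (Finset.mem_univ i)) hxb
    rw [le_div_iff₀ hmpos]
    nlinarith [hm_le i, hx0 i]
  have hBq_cpt : IsCompact (B q) := by
    apply Metric.isCompact_of_isClosed_isBounded hBq_closed
    apply (Metric.isBounded_closedBall (x := (0 : Fin ℓ → ℝ)) (r := w / m)).subset
    intro x hx
    rw [Metric.mem_closedBall, dist_zero_right]
    rw [pi_norm_le_iff_of_nonneg (by positivity)]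
    intro i
    rw [Real.norm_eq_abs, abs_le]
    have hx0 : ∀ i, 0 ≤ x i := by rw [hB q] at hx; exact hx.1
    constructor
    · have : (0:ℝ) ≤ w / m := by positivity
      linarith [hx0 i]
    · exact hBq_bd x hx i
  have hBq_ne : (0 : Fin ℓ → ℝ) ∈ B q := by
    rw [hB q]
    refine ⟨fun i => le_refl 0, ?_⟩
    simp only [Pi.zero_apply, mul_zero, Finset.sum_const_zero]
    exact Finset.sum_nonneg fun i _ => mul_nonneg (hqpos i).le (ha i)
  obtain ⟨y₀, hy₀B, hy₀max⟩ := hBq_cpt.exists_isMaxOn ⟨0, hBq_ne⟩ hU.continuousOn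
  set g : ℝ := U dε - U y₀ with hg_def
  have hg : 0 < g := sub_pos.2 (hgap y₀ hy₀B)
  have hmax : ∀ x ∈ B q, U x ≤ U dε - g := by
    intro x hx
    have := hy₀max hx
    simp only [Set.mem_setOf_eq] at this
    rw [hg_def]
    linarith
  -- uniform continuity setup
  set R₀ : ℝ := 2 * s / m with hR₀_def
  have hR₀pos : 0 < R₀ := by positivity
  obtain ⟨δ, hδpos, hδ⟩ := Metric.uniformContinuousOn_iff.1
    ((isCompact_closedBall (0 : Fin ℓ → ℝ) R₀).uniformContinuousOn_of_continuous
      hU.continuousOn) (g/3) (by linarith)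
  set η : ℝ := δ * w / (2 * (R₀ + 1)) with hη_def
  have hηpos : 0 < η := by positivity
  set θ : ℝ := w / (w + η) with hθ_def
  have hθpos : 0 < θ := by positivity
  have hθle1 : θ ≤ 1 := by
    rw [hθ_def, div_le_one (by linarith)]
    linarith
  have hθw : θ * (w + η) = w := by
    rw [hθ_def]; field_simp
  have hθδ : (1 - θ) * R₀ < δ := by
    have hA : (0:ℝ) < w + η := by linarith
    have h1 : (1 - θ) * (w + η) = η := by
      rw [hθ_def]; field_simp; ring
    have hη_le : η * (2*(R₀+1)) = δ * w := by
      rw [hη_def]; field_simp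
    have e1 : η * R₀ < η * (2*(R₀+1)) := by nlinarith [hηpos, hR₀pos]
    have h2 : η * R₀ < δ * (w + η) := by
      calc η * R₀ < δ * w := by rw [← hη_le]; exact e1
      _ ≤ δ * (w + η) := by nlinarith [hδpos, hηpos]
    have h3 : (1 - θ) * R₀ * (w + η) = η * R₀ := by linear_combination R₀ * h1
    have h4 : (1 - θ) * R₀ * (w + η) < δ * (w + η) := by rw [h3]; exact h2
    exact lt_of_mul_lt_mul_right h4 hA.le
  set ε' : ℝ := min (m/2) (η / (s + ℓ * R₀ + 1)) with hε'_def
  have hε'pos : 0 < ε' := lt_min (by positivity) (by positivity)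
  have hε'm : ε' ≤ m/2 := min_le_left _ _
  have hε'η : ε' * (s + ℓ * R₀) ≤ η := by
    have h1 : ε' ≤ η / (s + ℓ * R₀ + 1) := min_le_right _ _
    have h2 : (0:ℝ) ≤ s + ℓ * R₀ := by positivity
    have h3 : ε' * (s + ℓ * R₀) ≤ (η / (s + ℓ * R₀ + 1)) * (s + ℓ * R₀) :=
      mul_le_mul_of_nonneg_right h1 h2
    have h4 : (η / (s + ℓ * R₀ + 1)) * (s + ℓ * R₀) ≤ η := by
      rw [div_mul_eq_mul_div, div_le_iff₀ (by linarith)]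
      nlinarith
    linarith
  -- convergence of the infima
  have hcoord : ∀ γ > (0:ℝ), ∀ᶠ n in atTop, ∀ i, |p n i - q i| < γ := by
    intro γ hγ
    filter_upwards [Metric.tendsto_nhds.1 hconv γ hγ] with n hn i
    calc |p n i - q i| = dist (p n i) (q i) := (Real.dist_eq _ _).symm
    _ ≤ dist (p n) q := dist_le_pi_dist (p n) q i
    _ < γ := hn
  set mn : ℕ → ℝ := fun n => ⨅ h, p n h with hmn_def
  have hmn_bd : ∀ n, ∀ γ > (0:ℝ), (∀ i, |p n i - q i| < γ) → |mn n - m| ≤ γ := by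
    intro n γ hγ hn
    have hb : BddBelow (Set.range (p n)) := (Set.finite_range (p n)).bddBelow
    rw [abs_sub_le_iff]
    constructor
    · have h1 : mn n ≤ p n i₀ := ciInf_le hb i₀
      have h2 := (abs_sub_lt_iff.1 (hn i₀)).1
      rw [hm_eq]; linarith
    · have h1 : m - γ ≤ mn n := le_ciInf fun i => by
        have := (abs_sub_lt_iff.1 (hn i)).2
        linarith [hm_le i]
      linarith
  have hmn_tendsto : Tendsto mn atTop (nhds m) := by
    rw [Metric.tendsto_nhds]
    intro γ hγ
    filter_upwards [hcoord (γ/2) (by linarith)] with n hn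
    rw [Real.dist_eq]
    have := hmn_bd n (γ/2) (by linarith) hn
    linarith
  set tn : ℕ → ℝ := fun n => (1 / mn n) * s with htn_def
  have htn_tendsto : Tendsto tn atTop (nhds t) := by
    have h1 : Tendsto (fun n => 1 / mn n) atTop (nhds (1 / m)) :=
      Tendsto.div tendsto_const_nhds hmn_tendsto (ne_of_gt hmpos)
    exact h1.mul_const s
  set dεn : ℕ → Fin ℓ → ℝ := fun n i => min (d i + ε) (tn n) with hdεn_def
  have hdεn_tendsto : Tendsto (fun n => U (dεn n)) atTop (nhds (U dε)) := by
    have hφ : Continuous (fun τ : ℝ => fun i : Fin ℓ => min (d i + ε) τ) :=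
      continuous_pi fun i => continuous_const.min continuous_id
    have h1 : Tendsto (fun n => (fun i : Fin ℓ => min (d i + ε) (tn n))) atTop (nhds dε) :=
      (hφ.tendsto t).comp htn_tendsto
    exact (hU.tendsto dε).comp h1
  have hF2 : ∀ᶠ n in atTop, U dε - g/3 < U (dεn n) :=
    hdεn_tendsto.eventually (eventually_gt_nhds (by linarith))
  have hF3 : ∀ᶠ n in atTop, |tn n - t| < ε₀/2 := by
    filter_upwards [Metric.tendsto_nhds.1 htn_tendsto (ε₀/2) (by linarith)] with n hn
    rw [Real.dist_eq] at hn; exact hn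
  filter_upwards [hcoord ε' hε'pos, hF2, hF3] with n h1 h2 h3
  -- basic facts about p n
  have hpn_ge : ∀ i, m/2 ≤ p n i := by
    intro i
    have := (abs_sub_lt_iff.1 (h1 i)).2
    linarith [hm_le i]
  have hpn_pos := (hpΔ n).1
  have hpn_sum := (hpΔ n).2
  have hpn_le1 : ∀ i, p n i ≤ 1 := by
    intro i
    have := Finset.single_le_sum (fun j _ => (hpn_pos j).le) (Finset.mem_univ i)
    rw [hpn_sum] at this
    exact this
  have hmn_ge : m/2 ≤ mn n := le_ciInf hpn_ge
  have hmn_pos : 0 < mn n := lt_of_lt_of_le (by positivity) hmn_ge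
  have htn_pos : 0 < tn n := by
    rw [htn_def]
    positivity
  refine ⟨dεn n, ?_, ?_⟩
  · rw [hC (p n)]
    constructor
    · rw [hX (p n)]
      refine ⟨fun i => le_min (by linarith [hd0 i]) htn_pos.le, fun i => min_le_right _ _⟩
    · -- preference over B (p n)
      intro x hx
      rw [hB (p n)] at hx
      obtain ⟨hx0, hxb⟩ := hx
      have hsum_pa : ∑ i, p n i * a i ≤ s := by
        rw [hs_def]
        exact Finset.sum_le_sum fun i _ => mul_le_of_le_one_left (ha i) (hpn_le1 i)
      have hxR : ∀ i, x i ≤ R₀ := by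
        intro i
        have hterm : p n i * x i ≤ s :=
          le_trans (Finset.single_le_sum
            (fun j _ => mul_nonneg (hpn_pos j).le (hx0 j)) (Finset.mem_univ i))
            (le_trans hxb hsum_pa)
        rw [hR₀_def, le_div_iff₀ hmpos]
        nlinarith [hpn_ge i, hx0 i]
      have hxnorm : ‖x‖ ≤ R₀ := by
        rw [pi_norm_le_iff_of_nonneg hR₀pos.le]
        intro i
        rw [Real.norm_eq_abs, abs_le]
        exact ⟨by linarith [hx0 i], hxR i⟩
      have hqx : ∑ i, q i * x i ≤ w + η := by
        have hA : ∑ i, q i * x i ≤ ∑ i, (p n i * x i + ε' * x i) := by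
          apply Finset.sum_le_sum
          intro i _
          have := (abs_sub_lt_iff.1 (h1 i)).2
          nlinarith [hx0 i]
        have hB1 : ∑ i, (p n i * x i + ε' * x i) = ∑ i, p n i * x i + ε' * ∑ i, x i := by
          rw [Finset.sum_add_distrib, Finset.mul_sum]
        have hB2 : ∑ i, p n i * a i ≤ ∑ i, (q i * a i + ε' * a i) := by
          apply Finset.sum_le_sum
          intro i _
          have := (abs_sub_lt_iff.1 (h1 i)).1
          nlinarith [ha i]
        have hB3 : ∑ i, (q i * a i + ε' * a i) = w + ε' * s := by
          rw [hw_def, hs_def, Finset.mul_sum, ← Finset.sum_add_distrib]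
        have hB4 : ∑ i, x i ≤ ℓ * R₀ := by
          calc ∑ i, x i ≤ ∑ _i : Fin ℓ, R₀ := Finset.sum_le_sum fun i _ => hxR i
          _ = ℓ * R₀ := by rw [Finset.sum_const, Finset.card_univ, Fintype.card_fin]; ring
        have hB5 : ε' * ∑ i, x i ≤ ε' * (ℓ * R₀) :=
          mul_le_mul_of_nonneg_left hB4 hε'pos.le
        have : ∑ i, q i * x i ≤ w + ε' * s + ε' * (ℓ * R₀) := by
          calc ∑ i, q i * x i ≤ ∑ i, p n i * x i + ε' * ∑ i, x i := by rw [← hB1]; exact hA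
          _ ≤ (w + ε' * s) + ε' * (ℓ * R₀) := by
              have := le_trans hxb (le_trans hB2 (le_of_eq hB3))
              linarith
          _ = w + ε' * s + ε' * (ℓ * R₀) := by ring
        linarith [hε'η]
      have hθxB : θ • x ∈ B q := by
        rw [hB q]
        constructor
        · intro i
          simp only [Pi.smul_apply, smul_eq_mul]
          exact mul_nonneg hθpos.le (hx0 i)
        · have heq : ∑ i, q i * (θ • x) i = θ * ∑ i, q i * x i := by
            rw [Finset.mul_sum]
            apply Finset.sum_congr rfl
            intro i _
            simp only [Pi.smul_apply, smul_eq_mul]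
            ring
          rw [heq]
          calc θ * ∑ i, q i * x i ≤ θ * (w + η) := mul_le_mul_of_nonneg_left hqx hθpos.le
          _ = w := hθw
          _ = ∑ i, q i * a i := hw_def
      have hθxnorm : ‖θ • x‖ ≤ R₀ := by
        rw [norm_smul, Real.norm_eq_abs, abs_of_pos hθpos]
        calc θ * ‖x‖ ≤ 1 * ‖x‖ := mul_le_mul_of_nonneg_right hθle1 (norm_nonneg x)
        _ = ‖x‖ := one_mul _
        _ ≤ R₀ := hxnorm
      have hclose : dist x (θ • x) < δ := by
        rw [dist_eq_norm, show x - θ • x = (1 - θ) • x by rw [sub_smul, one_smul]]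
        rw [norm_smul, Real.norm_eq_abs, abs_of_nonneg (by linarith)]
        calc (1 - θ) * ‖x‖ ≤ (1 - θ) * R₀ :=
          mul_le_mul_of_nonneg_left hxnorm (by linarith)
        _ < δ := hθδ
      have hUclose : dist (U x) (U (θ • x)) < g/3 :=
        hδ x (by rw [Metric.mem_closedBall, dist_zero_right]; exact hxnorm)
          (θ • x) (by rw [Metric.mem_closedBall, dist_zero_right]; exact hθxnorm)
          hclose
      have h4 : U (θ • x) ≤ U dε - g := hmax _ hθxB
      rw [Real.dist_eq, abs_lt] at hUclose
      have : U x < U (dεn n) := by linarith [h2]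
      linarith
  · rw [dist_pi_lt_iff hε₀]
    intro i
    rw [Real.dist_eq, abs_sub_lt_iff]
    constructor
    · have : dεn n i ≤ d i + ε := min_le_left _ _
      simp only [hdεn_def] at this ⊢
      rw [hε_def] at this
      linarith
    · rcases le_total (d i + ε) (tn n) with hc | hc
      · have : dεn n i = d i + ε := min_eq_left hc
        simp only [hdεn_def] at this ⊢
        rw [this]
        linarith
      · have : dεn n i = tn n := min_eq_right hc
        simp only [hdεn_def] at this ⊢
        rw [this]
        have h5 := (abs_sub_lt_iff.1 h3).2
        have := hdle' i
        linarith
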